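/- Let (A, ·, ε, α_A) be an ε-commutative Hom-associative color algebra and (S, ∗, ε, α_S) a Hom-Novikov color algebra, both graded by the same abelian group G with the same bicharacter ε. Then S ⊗ A, with the grading (S⊗A)_c = ⊕_{a+b=c} S_a ⊗ A_b, the product (x⊗a) ⋆ (y⊗b) := ε(a,y) (x∗y) ⊗ (a·b) for homogeneous x, y ∈ S and a, b ∈ A, and the twisting map α_S ⊗ α_A, is a Hom-Novikov color algebra. -/

import Mathlib

open scoped TensorProduct

variable {K G A : Type*}

/-- A skew-symmetric bicharacter on the abelian group `G` with values in the field `K`. -/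
def IsBicharacter [Field K] [AddCommGroup G] (ε : G → G → K) : Prop :=
  (∀ a b, ε a b ≠ 0) ∧
  (∀ a b, ε a b * ε b a = 1) ∧
  (∀ a b c, ε a (b + c) = ε a b * ε a c) ∧
  (∀ a b c, ε (a + b) c = ε a c * ε b c)

section Defs

variable [Field K] [AddCommGroup G] [AddCommGroup A] [Module K A]

/-- The bilinear product `mul` respects the grading `𝒜`: `A_a · A_b ⊆ A_{a+b}`. -/
def IsGradedMul (𝒜 : G → Submodule K A) (mul : A →ₗ[K] A →ₗ[K] A) : Prop :=
  ∀ a b : G, ∀ x ∈ 𝒜 a, ∀ y ∈ 𝒜 b, mul x y ∈ 𝒜 (a + b)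

/-- An even linear map: `f(A_a) ⊆ A_a`. -/
def IsEven (𝒜 : G → Submodule K A) (f : A →ₗ[K] A) : Prop :=
  ∀ a : G, ∀ x ∈ 𝒜 a, f x ∈ 𝒜 a

/-- `ε`-commutativity: `x·y = ε(x,y) y·x` for homogeneous `x, y`. -/
def IsEpsCommutative (𝒜 : G → Submodule K A) (ε : G → G → K)
    (mul : A →ₗ[K] A →ₗ[K] A) : Prop :=
  ∀ a b : G, ∀ x ∈ 𝒜 a, ∀ y ∈ 𝒜 b, mul x y = ε a b • mul y x

/-- A Hom-associative color algebra: `α(x)·(y·z) = (x·y)·α(z)` for homogeneous `x, y, z`. -/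
def IsHomAssociative (𝒜 : G → Submodule K A) (mul : A →ₗ[K] A →ₗ[K] A)
    (α : A →ₗ[K] A) : Prop :=
  IsGradedMul 𝒜 mul ∧ IsEven 𝒜 α ∧
  ∀ a b c : G, ∀ x ∈ 𝒜 a, ∀ y ∈ 𝒜 b, ∀ z ∈ 𝒜 c,
    mul (α x) (mul y z) = mul (mul x y) (α z)

/-- A Hom-Novikov color algebra. -/
def IsHomNovikov (𝒜 : G → Submodule K A) (ε : G → G → K)
    (mul : A →ₗ[K] A →ₗ[K] A) (α : A →ₗ[K] A) : Prop :=
  IsGradedMul 𝒜 mul ∧ IsEven 𝒜 α ∧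
  (∀ a b c : G, ∀ x ∈ 𝒜 a, ∀ y ∈ 𝒜 b, ∀ z ∈ 𝒜 c,
    mul (mul x y) (α z) = ε b c • mul (mul x z) (α y)) ∧
  (∀ a b c : G, ∀ x ∈ 𝒜 a, ∀ y ∈ 𝒜 b, ∀ z ∈ 𝒜 c,
    mul (mul x y) (α z) - mul (α x) (mul y z)
      = ε a b • (mul (mul y x) (α z) - mul (α y) (mul x z)))

/-- A Hom-Lie color algebra. -/
def IsHomLie (𝒜 : G → Submodule K A) (ε : G → G → K)
    (br : A →ₗ[K] A →ₗ[K] A) (α : A →ₗ[K] A) : Prop :=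
  IsGradedMul 𝒜 br ∧ IsEven 𝒜 α ∧
  (∀ a b : G, ∀ x ∈ 𝒜 a, ∀ y ∈ 𝒜 b, br x y = -(ε a b • br y x)) ∧
  (∀ a b c : G, ∀ x ∈ 𝒜 a, ∀ y ∈ 𝒜 b, ∀ z ∈ 𝒜 c,
    ε c a • br (α x) (br y z) + ε a b • br (α y) (br z x)
      + ε b c • br (α z) (br x y) = 0)

/-- The `ε`-commutator `[x, y] = x·y − ε(a,b) y·x` of elements `x, y`
of degrees `a, b` respectively. -/
def homBracket (ε : G → G → K) (mul : A →ₗ[K] A →ₗ[K] A)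
    (a b : G) (x y : A) : A :=
  mul x y - ε a b • mul y x

end Defs

section Aux14
variable {K G S A : Type*} [Field K] [AddCommGroup G]
  [AddCommGroup S] [Module K S] [AddCommGroup A] [Module K A]
  (𝒮 : G → Submodule K S) (𝒜 : G → Submodule K A)

lemma aux_tmul_mem14 (a b c : G) (h : a + b = c) {x : S} (hx : x ∈ 𝒮 a)
    {u : A} (hu : u ∈ 𝒜 b) :
    x ⊗ₜ[K] u ∈ ⨆ (p : G × G) (_ : p.1 + p.2 = c),
        LinearMap.range (TensorProduct.map (𝒮 p.1).subtype (𝒜 p.2).subtype) := by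
  apply Submodule.mem_iSup_of_mem (a, b)
  apply Submodule.mem_iSup_of_mem h
  exact ⟨⟨x, hx⟩ ⊗ₜ[K] ⟨u, hu⟩, rfl⟩

lemma aux_induction14 (c : G) {P : S ⊗[K] A → Prop}
    (h0 : P 0) (hadd : ∀ s t, P s → P t → P (s + t))
    (hp : ∀ a b, a + b = c → ∀ x ∈ 𝒮 a, ∀ u ∈ 𝒜 b, P (x ⊗ₜ[K] u)) :
    ∀ t ∈ (⨆ (p : G × G) (_ : p.1 + p.2 = c),
        LinearMap.range (TensorProduct.map (𝒮 p.1).subtype (𝒜 p.2).subtype)), P t := by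
  intro t ht
  rw [iSup_subtype'] at ht
  refine Submodule.iSup_induction (motive := P) _ ht ?_ h0 hadd
  rintro ⟨⟨a, b⟩, hab⟩ x ⟨t', rfl⟩
  induction t' with
  | zero => simpa using h0
  | tmul s u => exact hp a b hab s.1 s.2 u.1 u.2
  | add s t hs ht => rw [map_add]; exact hadd _ _ hs ht

end Aux14

/-- the tensor product of a Hom-Novikov color algebra `S` with an
ε-commutative Hom-associative color algebra `A` is a Hom-Novikov color algebra,
with the grading `(S⊗A)_c = ⊕_{a+b=c} S_a ⊗ A_b`, the product determined on
homogeneous pure tensors by `(x⊗u) ⋆ (y⊗v) = ε(u,y) (x∗y) ⊗ (u·v)`, and the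
twisting map `α_S ⊗ α_A`. -/
theorem statement14 {K G S A : Type*} [Field K] [AddCommGroup G] [DecidableEq G]
    [AddCommGroup S] [Module K S] [AddCommGroup A] [Module K A]
    (𝒮 : G → Submodule K S) [DirectSum.Decomposition 𝒮]
    (𝒜 : G → Submodule K A) [DirectSum.Decomposition 𝒜]
    (ε : G → G → K) (hε : IsBicharacter ε)
    (mulA : A →ₗ[K] A →ₗ[K] A) (αA : A →ₗ[K] A)
    (hA : IsHomAssociative 𝒜 mulA αA) (hcomm : IsEpsCommutative 𝒜 ε mulA)
    (mulS : S →ₗ[K] S →ₗ[K] S) (αS : S →ₗ[K] S)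
    (hS : IsHomNovikov 𝒮 ε mulS αS)
    (mulT : (S ⊗[K] A) →ₗ[K] (S ⊗[K] A) →ₗ[K] (S ⊗[K] A))
    (hmulT : ∀ a b c d : G, ∀ x ∈ 𝒮 a, ∀ u ∈ 𝒜 b, ∀ y ∈ 𝒮 c, ∀ v ∈ 𝒜 d,
      mulT (x ⊗ₜ[K] u) (y ⊗ₜ[K] v) = ε b c • (mulS x y ⊗ₜ[K] mulA u v)) :
    IsHomNovikov
      (fun c : G => ⨆ (p : G × G) (_ : p.1 + p.2 = c),
        LinearMap.range (TensorProduct.map (𝒮 p.1).subtype (𝒜 p.2).subtype))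
      ε mulT (TensorProduct.map αS αA) := by
  obtain ⟨hεne, hεsym, hεr, hεl⟩ := hε
  obtain ⟨hAg, hAe, hAassoc⟩ := hA
  obtain ⟨hSg, hSe, hSnov1, hSnov2⟩ := hS
  -- key identity in A
  have hAkey : ∀ p q r : G, ∀ u ∈ 𝒜 p, ∀ v ∈ 𝒜 q, ∀ w ∈ 𝒜 r,
      mulA (mulA u v) (αA w) = ε q r • mulA (mulA u w) (αA v) := by
    intro p q r u hu v hv w hw
    rw [← hAassoc p q r u hu v hv w hw, hcomm q r v hv w hw, map_smul,
      hAassoc p r q u hu w hw v hv]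
  refine ⟨?_, ?_, ?_, ?_⟩
  · -- graded multiplication
    intro a b X hX Y hY
    revert X
    refine aux_induction14 𝒮 𝒜 a ?_ ?_ ?_
    · simp
    · intro s t hs ht
      rw [map_add, LinearMap.add_apply]
      exact Submodule.add_mem _ hs ht
    · intro a1 a2 ha x hx u hu
      revert Y
      refine aux_induction14 𝒮 𝒜 b ?_ ?_ ?_
      · simp
      · intro s t hs ht
        rw [map_add]
        exact Submodule.add_mem _ hs ht
      · intro b1 b2 hb y hy v hv
        rw [hmulT a1 a2 b1 b2 x hx u hu y hy v hv]
        refine Submodule.smul_mem _ _ ?_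
        exact aux_tmul_mem14 𝒮 𝒜 (a1 + b1) (a2 + b2) (a + b)
          (by rw [add_add_add_comm, ha, hb]) (hSg a1 b1 x hx y hy) (hAg a2 b2 u hu v hv)
  · -- evenness
    intro a X hX
    revert X
    refine aux_induction14 𝒮 𝒜 a ?_ ?_ ?_
    · simp
    · intro s t hs ht
      rw [map_add]
      exact Submodule.add_mem _ hs ht
    · intro a1 a2 ha x hx u hu
      rw [TensorProduct.map_tmul]
      exact aux_tmul_mem14 𝒮 𝒜 a1 a2 a ha (hSe a1 x hx) (hAe a2 u hu)
  · -- first Novikov identity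
    intro a b c X hX Y hY Z hZ
    revert X
    refine aux_induction14 𝒮 𝒜 a ?_ ?_ ?_
    · simp
    · intro s t hs ht
      simp only [map_add, LinearMap.add_apply, hs, ht, smul_add]
    · intro a1 a2 ha x hx u hu
      revert Y
      refine aux_induction14 𝒮 𝒜 b ?_ ?_ ?_
      · simp
      · intro s t hs ht
        simp only [map_add, LinearMap.add_apply, hs, ht, smul_add]
      · intro b1 b2 hb y hy v hv
        revert Z
        refine aux_induction14 𝒮 𝒜 c ?_ ?_ ?_
        · simp
        · intro s t hs ht
          simp only [map_add, LinearMap.add_apply, hs, ht, smul_add]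
        · intro c1 c2 hc z hz w hw
          simp only [TensorProduct.map_tmul]
          rw [hmulT a1 a2 b1 b2 x hx u hu y hy v hv,
            hmulT a1 a2 c1 c2 x hx u hu z hz w hw]
          simp only [map_smul, LinearMap.smul_apply]
          rw [hmulT (a1+b1) (a2+b2) c1 c2 _ (hSg a1 b1 x hx y hy) _
              (hAg a2 b2 u hu v hv) _ (hSe c1 z hz) _ (hAe c2 w hw),
            hmulT (a1+c1) (a2+c2) b1 b2 _ (hSg a1 c1 x hx z hz) _
              (hAg a2 c2 u hu w hw) _ (hSe b1 y hy) _ (hAe b2 v hv),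
            hSnov1 a1 b1 c1 x hx y hy z hz,
            hAkey a2 b2 c2 u hu v hv w hw]
          simp only [← TensorProduct.smul_tmul', TensorProduct.tmul_smul, smul_smul]
          rw [← hb, ← hc]
          match_scalars
          simp only [hεr, hεl]
          linear_combination (-(ε a2 b1 * ε a2 c1 * ε b2 c1 * ε b1 c1 * ε b2 c2)) *
            hεsym b1 c2
  · -- second Novikov identity
    intro a b c X hX Y hY Z hZ
    revert X
    refine aux_induction14 𝒮 𝒜 a ?_ ?_ ?_
    · simp
    · intro s t hs ht
      simp only [map_add, LinearMap.add_apply, sub_eq_iff_eq_add] at hs ht ⊢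
      rw [hs, ht]
      module
    · intro a1 a2 ha x hx u hu
      revert Y
      refine aux_induction14 𝒮 𝒜 b ?_ ?_ ?_
      · simp
      · intro s t hs ht
        simp only [map_add, LinearMap.add_apply, sub_eq_iff_eq_add] at hs ht ⊢
        rw [hs, ht]
        module
      · intro b1 b2 hb y hy v hv
        revert Z
        refine aux_induction14 𝒮 𝒜 c ?_ ?_ ?_
        · simp
        · intro s t hs ht
          simp only [map_add, LinearMap.add_apply, sub_eq_iff_eq_add] at hs ht ⊢
          rw [hs, ht]
          module
        · intro c1 c2 hc z hz w hw
          simp only [TensorProduct.map_tmul]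
          rw [hmulT a1 a2 b1 b2 x hx u hu y hy v hv,
            hmulT b1 b2 a1 a2 y hy v hv x hx u hu,
            hmulT b1 b2 c1 c2 y hy v hv z hz w hw,
            hmulT a1 a2 c1 c2 x hx u hu z hz w hw]
          simp only [map_smul, LinearMap.smul_apply]
          rw [hmulT (a1+b1) (a2+b2) c1 c2 _ (hSg a1 b1 x hx y hy) _
              (hAg a2 b2 u hu v hv) _ (hSe c1 z hz) _ (hAe c2 w hw),
            hmulT (b1+a1) (b2+a2) c1 c2 _ (hSg b1 a1 y hy x hx) _
              (hAg b2 a2 v hv u hu) _ (hSe c1 z hz) _ (hAe c2 w hw),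
            hmulT a1 a2 (b1+c1) (b2+c2) _ (hSe a1 x hx) _ (hAe a2 u hu) _
              (hSg b1 c1 y hy z hz) _ (hAg b2 c2 v hv w hw),
            hmulT b1 b2 (a1+c1) (a2+c2) _ (hSe b1 y hy) _ (hAe b2 v hv) _
              (hSg a1 c1 x hx z hz) _ (hAg a2 c2 u hu w hw)]
          -- normalize the A-factors
          rw [hAassoc a2 b2 c2 u hu v hv w hw, hAassoc b2 a2 c2 v hv u hu w hw,
            hcomm b2 a2 v hv u hu]
          simp only [map_smul, LinearMap.smul_apply]
          -- rewrite the S-factor using the second Novikov identity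
          have hP1 : mulS (mulS x y) (αS z) =
              ε a1 b1 • mulS (mulS y x) (αS z) - ε a1 b1 • mulS (αS y) (mulS x z)
                + mulS (αS x) (mulS y z) := by
            have h := hSnov2 a1 b1 c1 x hx y hy z hz
            rw [smul_sub] at h
            exact eq_add_of_sub_eq h
          rw [hP1, ← hb, ← ha]
          simp only [← TensorProduct.smul_tmul', TensorProduct.tmul_smul,
            TensorProduct.sub_tmul, TensorProduct.add_tmul, smul_smul, smul_sub, smul_add]
          match_scalars
          · simp only [hεr, hεl]
            linear_combination
              (-(ε a2 b1 * ε a2 c1 * ε b2 c1 * ε a1 b1) * (ε a2 b2 * ε b2 a2)) *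
                hεsym a1 b2 + (-(ε a2 b1 * ε a2 c1 * ε b2 c1 * ε a1 b1)) * hεsym a2 b2
          · simp only [hεr, hεl]
            linear_combination
              ((ε a2 b1 * ε a2 c1 * ε b2 c1 * ε a1 b1) * (ε a2 b2 * ε b2 a2)) *
                hεsym a1 b2 + (ε a2 b1 * ε a2 c1 * ε b2 c1 * ε a1 b1) * hεsym a2 b2
          · simp only [hεr, hεl]
            ring
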